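/- Let (X, f) be a surjective zero-dimensional dynamical system, i.e., X is a nonempty compact metric space with a basis of clopen sets and f : X → X is a continuous surjection. Then there exists a sequence {U_i}_{i∈ℕ} of finite partitions of X into nonempty clopen sets with mesh(U_i) → 0 as i → ∞, such that each element of U_i is contained in a (necessarily unique) element of U_{i−1}; letting φ_i : U_i → U_{i−1} be the inclusion-induced maps and letting each U_i carry the edge relation f^{U_i} = {(U, V) ∈ U_i × U_i : f(U) ∩ V ≠ ∅}, the sequence ((U_i, f^{U_i}), φ_i) is an inverse sequence of graph covers whose inverse limit system (V_G, E_G) is topologically conjugate to (X, f). -/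

import Mathlib

open Set

section Helpers

open scoped Classical

variable {X : Type} [MetricSpace X] [CompactSpace X] [Nonempty X]

/-- A pre-partition: clopen pieces, covering, pairwise disjoint (pieces may be empty). -/
def IsPrepart (P : Finset (Set X)) : Prop :=
  (∀ U ∈ P, IsClopen U) ∧ (⋃₀ ((P : Set (Set X))) = Set.univ) ∧
    ((P : Set (Set X))).PairwiseDisjoint id

/-- A genuine partition: additionally all pieces nonempty. -/
def IsPart (P : Finset (Set X)) : Prop :=
  (∀ U ∈ P, IsClopen U ∧ U.Nonempty) ∧ (⋃₀ ((P : Set (Set X))) = Set.univ) ∧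
    ((P : Set (Set X))).PairwiseDisjoint id

lemma IsPart.prepart {P : Finset (Set X)} (h : IsPart P) : IsPrepart P :=
  ⟨fun U hU => (h.1 U hU).1, h.2.1, h.2.2⟩

lemma IsPrepart.exists_mem {P : Finset (Set X)} (h : IsPrepart P) (x : X) :
    ∃ U ∈ P, x ∈ U := by
  have : x ∈ ⋃₀ ((P : Set (Set X))) := h.2.1 ▸ mem_univ x
  obtain ⟨U, hU, hxU⟩ := this
  exact ⟨U, hU, hxU⟩

lemma IsPrepart.unique {P : Finset (Set X)} (h : IsPrepart P) {U V : Set X}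
    (hU : U ∈ P) (hV : V ∈ P) {x : X} (hxU : x ∈ U) (hxV : x ∈ V) : U = V := by
  by_contra hne
  exact Set.disjoint_left.1 (h.2.2 hU hV hne) hxU hxV

lemma IsPart.unique {P : Finset (Set X)} (h : IsPart P) {U V : Set X}
    (hU : U ∈ P) (hV : V ∈ P) {x : X} (hxU : x ∈ U) (hxV : x ∈ V) : U = V :=
  h.prepart.unique hU hV hxU hxV

/-- Common refinement of two pre-partitions, keeping only nonempty pieces. -/
noncomputable def prefine (P Q : Finset (Set X)) : Finset (Set X) :=
  ((P ×ˢ Q).image fun p => p.1 ∩ p.2).filter fun S => S.Nonempty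

lemma mem_prefine {P Q : Finset (Set X)} {S : Set X} :
    S ∈ prefine P Q ↔ (∃ U ∈ P, ∃ V ∈ Q, S = U ∩ V) ∧ S.Nonempty := by
  classical
  simp only [prefine, Finset.mem_filter, Finset.mem_image, Finset.mem_product]
  constructor
  · rintro ⟨⟨⟨U, V⟩, ⟨hU, hV⟩, rfl⟩, hne⟩
    exact ⟨⟨U, hU, V, hV, rfl⟩, hne⟩
  · rintro ⟨⟨U, hU, V, hV, rfl⟩, hne⟩
    exact ⟨⟨⟨U, V⟩, ⟨hU, hV⟩, rfl⟩, hne⟩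

lemma prefine_isPart {P Q : Finset (Set X)} (hP : IsPrepart P) (hQ : IsPrepart Q) :
    IsPart (prefine P Q) := by
  refine ⟨?_, ?_, ?_⟩
  · intro S hS
    obtain ⟨⟨U, hU, V, hV, rfl⟩, hne⟩ := mem_prefine.1 hS
    exact ⟨(hP.1 U hU).inter (hQ.1 V hV), hne⟩
  · apply Set.eq_univ_of_forall
    intro x
    obtain ⟨U, hU, hxU⟩ := hP.exists_mem x
    obtain ⟨V, hV, hxV⟩ := hQ.exists_mem x
    exact ⟨U ∩ V, Finset.mem_coe.2 (mem_prefine.2 ⟨⟨U, hU, V, hV, rfl⟩, ⟨x, hxU, hxV⟩⟩),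
      hxU, hxV⟩
  · intro S hS T hT hne
    simp only [Function.onFun, id_eq]
    rw [Set.disjoint_left]
    intro x hxS hxT
    apply hne
    obtain ⟨⟨U, hU, V, hV, rfl⟩, -⟩ := mem_prefine.1 (Finset.mem_coe.1 hS)
    obtain ⟨⟨U', hU', V', hV', rfl⟩, -⟩ := mem_prefine.1 (Finset.mem_coe.1 hT)
    have hUU : U = U' := hP.unique hU hU' hxS.1 hxT.1
    have hVV : V = V' := hQ.unique hV hV' hxS.2 hxT.2
    simp [hUU, hVV]

lemma prefine_subset_left {P Q : Finset (Set X)} {S : Set X} (hS : S ∈ prefine P Q) :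
    ∃ U ∈ P, S ⊆ U := by
  obtain ⟨⟨U, hU, V, hV, rfl⟩, -⟩ := mem_prefine.1 hS
  exact ⟨U, hU, Set.inter_subset_left⟩

lemma prefine_subset_right {P Q : Finset (Set X)} {S : Set X} (hS : S ∈ prefine P Q) :
    ∃ V ∈ Q, S ⊆ V := by
  obtain ⟨⟨U, hU, V, hV, rfl⟩, -⟩ := mem_prefine.1 hS
  exact ⟨V, hV, Set.inter_subset_right⟩

/-- The preimage of a partition under a continuous map. -/
noncomputable def preim (f : X → X) (P : Finset (Set X)) : Finset (Set X) := P.image (f ⁻¹' ·)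

lemma mem_preim {f : X → X} {P : Finset (Set X)} {S : Set X} :
    S ∈ preim f P ↔ ∃ U ∈ P, f ⁻¹' U = S := by
  simp [preim]

lemma preim_isPrepart {f : X → X} (hf : Continuous f) {P : Finset (Set X)}
    (h : IsPrepart P) : IsPrepart (preim f P) := by
  refine ⟨?_, ?_, ?_⟩
  · intro S hS
    obtain ⟨U, hU, rfl⟩ := Finset.mem_image.1 hS
    exact (h.1 U hU).preimage hf
  · apply Set.eq_univ_of_forall
    intro x
    obtain ⟨U, hU, hxU⟩ := h.exists_mem (f x)
    exact ⟨f ⁻¹' U, Finset.mem_coe.2 (Finset.mem_image.2 ⟨U, hU, rfl⟩), hxU⟩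
  · intro S hS T hT hne
    obtain ⟨U, hU, rfl⟩ := Finset.mem_image.1 (Finset.mem_coe.1 hS)
    obtain ⟨V, hV, rfl⟩ := Finset.mem_image.1 (Finset.mem_coe.1 hT)
    have : U ≠ V := fun h' => hne (by rw [h'])
    simp only [Function.onFun, id_eq]
    rw [Set.disjoint_left]
    intro x hxU hxV
    exact Set.disjoint_left.1 (h.2.2 hU hV this) hxU hxV

/-- Pre-partition obtained from a list of clopen sets by taking atoms. -/
noncomputable def partOf (l : List (Set X)) : Finset (Set X) :=
  l.foldr (fun U P => prefine {U, Uᶜ} P) {Set.univ}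

lemma pair_isPrepart {U : Set X} (hU : IsClopen U) :
    IsPrepart ({U, Uᶜ} : Finset (Set X)) := by
  refine ⟨?_, ?_, ?_⟩
  · intro S hS
    rcases Finset.mem_insert.1 hS with rfl | hS
    · exact hU
    · rw [Finset.mem_singleton.1 hS]; exact hU.compl
  · apply Set.eq_univ_of_forall
    intro x
    by_cases hx : x ∈ U
    · exact ⟨U, by simp, hx⟩
    · exact ⟨Uᶜ, by simp, hx⟩
  · intro S hS T hT hne
    simp only [Finset.coe_insert, Finset.coe_singleton, Set.mem_insert_iff,
      Set.mem_singleton_iff] at hS hT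
    rcases hS with rfl | rfl <;> rcases hT with rfl | rfl
    · exact absurd rfl hne
    · exact disjoint_compl_right
    · exact disjoint_compl_left
    · exact absurd rfl hne

lemma partOf_isPart {l : List (Set X)} (hl : ∀ U ∈ l, IsClopen U) :
    IsPart (partOf l) := by
  induction l with
  | nil =>
    refine ⟨?_, ?_, ?_⟩
    · intro U hU
      rw [Finset.mem_singleton.1 hU]
      exact ⟨isClopen_univ, Set.univ_nonempty⟩
    · simp [partOf]
    · simp [partOf]
  | cons U l ih =>
    have hU : IsClopen U := hl U List.mem_cons_self
    have hl' : ∀ V ∈ l, IsClopen V := fun V hV => hl V (List.mem_cons_of_mem _ hV)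
    exact prefine_isPart (pair_isPrepart hU) (ih hl').prepart

lemma partOf_subset {l : List (Set X)} (hl : ∀ U ∈ l, IsClopen U) :
    ∀ S ∈ partOf l, ∀ U ∈ l, S ⊆ U ∨ S ⊆ Uᶜ := by
  induction l with
  | nil => intro S hS U hU; exact absurd hU List.not_mem_nil
  | cons V l ih =>
    intro S hS U hU
    have hSr := prefine_subset_right (P := {V, Vᶜ}) hS
    have hSl := prefine_subset_left (P := {V, Vᶜ}) hS
    rcases List.mem_cons.1 hU with rfl | hU
    · obtain ⟨W, hW, hSW⟩ := hSl
      rcases Finset.mem_insert.1 hW with rfl | hW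
      · exact Or.inl hSW
      · rw [Finset.mem_singleton.1 hW] at hSW
        exact Or.inr hSW
    · obtain ⟨T, hT, hST⟩ := hSr
      have hl' : ∀ W ∈ l, IsClopen W := fun W hW => hl W (List.mem_cons_of_mem _ hW)
      rcases ih hl' T hT U hU with h | h
      · exact Or.inl (hST.trans h)
      · exact Or.inr (hST.trans h)

/-- Existence of clopen partitions of arbitrarily small mesh. -/
lemma exists_small_part
    (hzero : ∃ B : Set (Set X), TopologicalSpace.IsTopologicalBasis B ∧ ∀ U ∈ B, IsClopen U)
    {ε : ℝ} (hε : 0 < ε) :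
    ∃ P : Finset (Set X), IsPart P ∧ ∀ U ∈ P, Metric.diam U ≤ ε := by
  obtain ⟨B, hB, hBclopen⟩ := hzero
  -- for every x, a clopen set containing x of diameter ≤ ε
  have key : ∀ x : X, ∃ U : Set X, IsClopen U ∧ x ∈ U ∧ Metric.diam U ≤ ε := by
    intro x
    obtain ⟨U, hUB, hxU, hUsub⟩ := hB.exists_subset_of_mem_open
      (Metric.mem_ball_self (half_pos hε)) Metric.isOpen_ball
    refine ⟨U, hBclopen U hUB, hxU, ?_⟩
    calc Metric.diam U ≤ Metric.diam (Metric.ball x (ε / 2)) :=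
          Metric.diam_mono hUsub Metric.isBounded_ball
      _ ≤ 2 * (ε / 2) := Metric.diam_ball (le_of_lt (half_pos hε))
      _ = ε := by ring
  choose Ux hUxclopen hxUx hUxdiam using key
  obtain ⟨t, ht⟩ := isCompact_univ.elim_finite_subcover Ux
    (fun x => (hUxclopen x).2) (fun x _ => Set.mem_iUnion.2 ⟨x, hxUx x⟩)
  set l : List (Set X) := t.toList.map Ux with hl
  have hlclopen : ∀ U ∈ l, IsClopen U := by
    intro U hU
    obtain ⟨x, -, rfl⟩ := List.mem_map.1 hU
    exact hUxclopen x
  refine ⟨partOf l, partOf_isPart hlclopen, ?_⟩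
  intro S hS
  have hSne : S.Nonempty := ((partOf_isPart hlclopen).1 S hS).2
  obtain ⟨x, hx⟩ := hSne
  have : x ∈ ⋃ y ∈ t, Ux y := ht (mem_univ x)
  obtain ⟨y, hyt, hxy⟩ := Set.mem_iUnion₂.1 this
  have hmem : Ux y ∈ l := List.mem_map.2 ⟨y, (Finset.mem_toList).2 hyt, rfl⟩
  rcases partOf_subset hlclopen S hS (Ux y) hmem with h | h
  · exact (Metric.diam_mono h (Metric.isBounded_of_compactSpace)).trans (hUxdiam y)
  · exact absurd (h hx) (fun h' => h' hxy)

end Helpers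


/-- The inverse limit of the sets of a sequence of partitions `𝒰 i`, along
inclusion-induced maps `φ`. -/
def PartLimit {X : Type} (𝒰 : ℕ → Finset (Set X))
    (φ : ∀ i, {U : Set X // U ∈ 𝒰 (i + 1)} → {U : Set X // U ∈ 𝒰 i}) : Type :=
  {x : ∀ i, {U : Set X // U ∈ 𝒰 i} // ∀ i, x i = φ i (x (i + 1))}

/-- The inverse limit as a subspace of the product of the discrete finite spaces. -/
instance {X : Type} (𝒰 : ℕ → Finset (Set X))
    (φ : ∀ i, {U : Set X // U ∈ 𝒰 (i + 1)} → {U : Set X // U ∈ 𝒰 i}) :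
    TopologicalSpace (PartLimit 𝒰 φ) :=
  letI : ∀ i, TopologicalSpace {U : Set X // U ∈ 𝒰 i} := fun _ => ⊥
  inferInstanceAs
    (TopologicalSpace {x : ∀ i, {U : Set X // U ∈ 𝒰 i} // ∀ i, x i = φ i (x (i + 1))})

/-- **Theorem (Shimomura).** Let `(X, f)` be a surjective zero-dimensional dynamical
system. Then there is a sequence `𝒰 i` of finite partitions of `X` into nonempty
clopen sets with mesh tending to `0`, each refining the previous one, such that with
the edge relations `f^{𝒰 i} = {(U, V) : f(U) ∩ V ≠ ∅}` and the inclusion-induced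
connecting maps `φ`, the sequence is an inverse sequence of graph covers whose inverse
limit system is topologically conjugate to `(X, f)`. -/
theorem zero_dim_conjugate_to_graph_cover_limit {X : Type} [MetricSpace X]
    [CompactSpace X] [Nonempty X]
    (hzero : ∃ B : Set (Set X), TopologicalSpace.IsTopologicalBasis B ∧ ∀ U ∈ B, IsClopen U)
    (f : X → X) (hf : Continuous f) (hsurj : Function.Surjective f) :
    ∃ 𝒰 : ℕ → Finset (Set X),
      -- partitions into nonempty clopen sets
      (∀ i, ∀ U ∈ 𝒰 i, IsClopen U ∧ U.Nonempty) ∧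
      (∀ i, ⋃₀ ((𝒰 i : Set (Set X))) = Set.univ) ∧
      (∀ i, ((𝒰 i : Set (Set X))).PairwiseDisjoint id) ∧
      -- mesh 𝒰 i → 0
      (∀ ε : ℝ, 0 < ε → ∃ N, ∀ i ≥ N, ∀ U ∈ 𝒰 i, Metric.diam U ≤ ε) ∧
      -- inclusion-induced connecting maps
      ∃ φ : ∀ i, {U : Set X // U ∈ 𝒰 (i + 1)} → {U : Set X // U ∈ 𝒰 i},
        (∀ i U, U.1 ⊆ (φ i U).1) ∧
        -- the graphs (𝒰 i, f^{𝒰 i}) are edge-surjective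
        (∀ i, ∀ v : {U : Set X // U ∈ 𝒰 i}, ∃ u : {U : Set X // U ∈ 𝒰 i}, (f '' u.1 ∩ v.1).Nonempty) ∧
        (∀ i, ∀ v : {U : Set X // U ∈ 𝒰 i}, ∃ w : {U : Set X // U ∈ 𝒰 i}, (f '' v.1 ∩ w.1).Nonempty) ∧
        -- φ i is a graph homomorphism
        (∀ i, ∀ u v : {U : Set X // U ∈ 𝒰 (i + 1)},
          (f '' u.1 ∩ v.1).Nonempty → (f '' (φ i u).1 ∩ (φ i v).1).Nonempty) ∧
        -- φ i is edge-surjective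
        (∀ i, ∀ u v : {U : Set X // U ∈ 𝒰 i}, (f '' u.1 ∩ v.1).Nonempty →
          ∃ a b : {U : Set X // U ∈ 𝒰 (i + 1)},
            (f '' a.1 ∩ b.1).Nonempty ∧ φ i a = u ∧ φ i b = v) ∧
        -- φ i is +directional
        (∀ i, ∀ u v w : {U : Set X // U ∈ 𝒰 (i + 1)},
          (f '' u.1 ∩ v.1).Nonempty → (f '' u.1 ∩ w.1).Nonempty → φ i v = φ i w) ∧
        -- the inverse limit system (V_G, E_G) is conjugate to (X, f):
        -- h is a homeomorphism and h(f x) is the E_G-image of h(x)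
        ∃ h : X → PartLimit 𝒰 φ, IsHomeomorph h ∧
          ∀ x : X, ∀ i, (f '' ((h x).1 i).1 ∩ ((h (f x)).1 i).1).Nonempty := by
  classical
  have hsp : ∀ n : ℕ, ∃ P : Finset (Set X),
      IsPart P ∧ ∀ U ∈ P, Metric.diam U ≤ 1 / ((n : ℝ) + 1) := fun n =>
    exists_small_part hzero (by positivity)
  choose P hPpart hPdiam using hsp
  let 𝒰 : ℕ → Finset (Set X) := fun n =>
    Nat.rec (P 0) (fun n Un => prefine (prefine Un (preim f Un)) (P (n + 1))) n
  have hUs : ∀ n, 𝒰 (n + 1) = prefine (prefine (𝒰 n) (preim f (𝒰 n))) (P (n + 1)) :=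
    fun n => rfl
  have hUpart : ∀ n, IsPart (𝒰 n) := by
    intro n
    induction n with
    | zero => exact hPpart 0
    | succ n ih =>
      rw [hUs]
      exact prefine_isPart
        ((prefine_isPart ih.prepart (preim_isPrepart hf ih.prepart)).prepart)
        (hPpart (n + 1)).prepart
  have hdiam : ∀ n, ∀ U ∈ 𝒰 n, Metric.diam U ≤ 1 / ((n : ℝ) + 1) := by
    intro n
    cases n with
    | zero => exact hPdiam 0
    | succ n =>
      intro U hU
      rw [hUs] at hU
      obtain ⟨V, hV, hUV⟩ := prefine_subset_right hU
      exact (Metric.diam_mono hUV Metric.isBounded_of_compactSpace).trans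
        (hPdiam (n + 1) V hV)
  have hsub : ∀ n (U : {U : Set X // U ∈ 𝒰 (n + 1)}),
      ∃ V : {V : Set X // V ∈ 𝒰 n}, U.1 ⊆ V.1 := by
    rintro n ⟨U, hU⟩
    rw [hUs] at hU
    obtain ⟨W, hW, hUW⟩ := prefine_subset_left hU
    obtain ⟨V, hV, hWV⟩ := prefine_subset_left hW
    exact ⟨⟨V, hV⟩, hUW.trans hWV⟩
  have himg : ∀ n (U : {U : Set X // U ∈ 𝒰 (n + 1)}),
      ∃ V : {V : Set X // V ∈ 𝒰 n}, f '' U.1 ⊆ V.1 := by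
    rintro n ⟨U, hU⟩
    rw [hUs] at hU
    obtain ⟨W, hW, hUW⟩ := prefine_subset_left hU
    obtain ⟨W', hW', hWW'⟩ := prefine_subset_right hW
    obtain ⟨V, hV, rfl⟩ := mem_preim.1 hW'
    exact ⟨⟨V, hV⟩, Set.image_subset_iff.2 (hUW.trans hWW')⟩
  choose φ hφ using hsub
  choose ψ hψ using himg
  have huniq : ∀ n {U V : Set X}, U ∈ 𝒰 n → V ∈ 𝒰 n →
      ∀ {x : X}, x ∈ U → x ∈ V → U = V := by
    intro n U V hU hV x hxU hxV
    exact (hUpart n).unique hU hV hxU hxV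
  -- the piece containing a point
  choose pc hpcmem hpcx using fun i (x : X) => (hUpart i).prepart.exists_mem x
  refine ⟨𝒰, fun i => (hUpart i).1, fun i => (hUpart i).2.1, fun i => (hUpart i).2.2,
    ?_, φ, hφ, ?_, ?_, ?_, ?_, ?_, ?_⟩
  · -- mesh → 0
    intro ε hε
    obtain ⟨N, hN⟩ := exists_nat_one_div_lt hε
    refine ⟨N, fun i hi U hU => ?_⟩
    refine (hdiam i U hU).trans (le_trans ?_ hN.le)
    apply one_div_le_one_div_of_le (by positivity)
    have : (N : ℝ) ≤ (i : ℝ) := Nat.cast_le.2 hi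
    linarith
  · -- incoming edges
    rintro i ⟨V, hV⟩
    obtain ⟨y, hy⟩ := ((hUpart i).1 V hV).2
    obtain ⟨x, rfl⟩ := hsurj y
    exact ⟨⟨pc i x, hpcmem i x⟩, f x, ⟨x, hpcx i x, rfl⟩, hy⟩
  · -- outgoing edges
    rintro i ⟨V, hV⟩
    obtain ⟨x, hx⟩ := ((hUpart i).1 V hV).2
    exact ⟨⟨pc i (f x), hpcmem i (f x)⟩, f x, ⟨x, hx, rfl⟩, hpcx i (f x)⟩
  · -- graph homomorphism
    intro i u v hne
    exact hne.mono (Set.inter_subset_inter (Set.image_mono (hφ i u)) (hφ i v))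
  · -- edge surjectivity of φ
    rintro i ⟨U, hU⟩ ⟨V, hV⟩ ⟨y, ⟨x, hxU, rfl⟩, hyV⟩
    refine ⟨⟨pc (i + 1) x, hpcmem (i + 1) x⟩, ⟨pc (i + 1) (f x), hpcmem (i + 1) (f x)⟩,
      ⟨f x, ⟨x, hpcx (i + 1) x, rfl⟩, hpcx (i + 1) (f x)⟩, ?_, ?_⟩
    · exact Subtype.ext (huniq i (φ i _).2 hU (hφ i _ (hpcx (i + 1) x)) hxU)
    · exact Subtype.ext (huniq i (φ i _).2 hV (hφ i _ (hpcx (i + 1) (f x))) hyV)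
  · -- +directional
    rintro i u v w ⟨y, hyu, hyv⟩ ⟨z, hzu, hzw⟩
    have h1 : (φ i v).1 = (ψ i u).1 :=
      huniq i (φ i v).2 (ψ i u).2 (hφ i v hyv) (hψ i u hyu)
    have h2 : (φ i w).1 = (ψ i u).1 :=
      huniq i (φ i w).2 (ψ i u).2 (hφ i w hzw) (hψ i u hzu)
    exact Subtype.ext (h1.trans h2.symm)
  · -- the conjugacy
    letI tinst : ∀ i, TopologicalSpace {U : Set X // U ∈ 𝒰 i} := fun _ => ⊥
    haveI hdisc : ∀ i, DiscreteTopology {U : Set X // U ∈ 𝒰 i} := fun i => ⟨rfl⟩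
    haveI : ∀ i, T2Space {U : Set X // U ∈ 𝒰 i} := fun i => @DiscreteTopology.toT2Space _ (tinst i) (hdisc i)
    haveI : T2Space (PartLimit 𝒰 φ) :=
      inferInstanceAs
        (T2Space {x : ∀ i, {U : Set X // U ∈ 𝒰 i} // ∀ i, x i = φ i (x (i + 1))})
    have hcompat : ∀ (x : X) (i : ℕ),
        (⟨pc i x, hpcmem i x⟩ : {U : Set X // U ∈ 𝒰 i}) =
          φ i ⟨pc (i + 1) x, hpcmem (i + 1) x⟩ := by
      intro x i
      exact Subtype.ext (huniq i (hpcmem i x) (φ i _).2 (hpcx i x)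
        (hφ i _ (hpcx (i + 1) x)))
    set h : X → PartLimit 𝒰 φ :=
      fun x => ⟨fun i => ⟨pc i x, hpcmem i x⟩, fun i => hcompat x i⟩ with hh
    have hpre : ∀ (i : ℕ) (U : Set X) (hU : U ∈ 𝒰 i),
        (fun x : X => (⟨pc i x, hpcmem i x⟩ : {U : Set X // U ∈ 𝒰 i})) ⁻¹'
          {⟨U, hU⟩} = U := by
      intro i U hU
      ext x
      simp only [Set.mem_preimage, Set.mem_singleton_iff, Subtype.ext_iff]
      constructor
      · rintro rfl; exact hpcx i x
      · intro hx; exact huniq i (hpcmem i x) hU (hpcx i x) hx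
    have hcont : Continuous h := by
      apply Continuous.subtype_mk
      apply continuous_pi
      intro i
      rw [continuous_discrete_rng]
      rintro ⟨U, hU⟩
      rw [hpre i U hU]
      exact ((hUpart i).1 U hU).1.2
    have hinj : Function.Injective h := by
      intro x y hxy
      have hpc : ∀ i, pc i x = pc i y := by
        intro i
        have := congrArg (fun z : PartLimit 𝒰 φ => (z.1 i).1) hxy
        exact this
      have hdist : ∀ i : ℕ, dist x y ≤ 1 / ((i : ℝ) + 1) := by
        intro i
        have hx : x ∈ pc i x := hpcx i x
        have hy : y ∈ pc i x := (hpc i) ▸ hpcx i y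
        exact (Metric.dist_le_diam_of_mem Metric.isBounded_of_compactSpace hx hy).trans
          (hdiam i _ (hpcmem i x))
      by_contra hne
      have hd : 0 < dist x y := dist_pos.2 (fun h' => hne (h' ▸ rfl))
      obtain ⟨n, hn⟩ := exists_nat_one_div_lt hd
      exact absurd (hdist n) (not_le.2 hn)
    have hsurjh : Function.Surjective h := by
      rintro ⟨z, hz⟩
      set t : ℕ → Set X := fun i => (z i).1 with ht
      have htd : ∀ i, t (i + 1) ⊆ t i := by
        intro i
        have := hφ i (z (i + 1))
        rw [← hz i] at this
        exact this
      have htn : ∀ i, (t i).Nonempty := fun i => ((hUpart i).1 _ (z i).2).2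
      have htcl : ∀ i, IsClosed (t i) := fun i => ((hUpart i).1 _ (z i).2).1.1
      obtain ⟨x, hx⟩ := IsCompact.nonempty_iInter_of_sequence_nonempty_isCompact_isClosed
        t htd htn ((htcl 0).isCompact) htcl
      refine ⟨x, Subtype.ext (funext fun i => Subtype.ext ?_)⟩
      exact huniq i (hpcmem i x) (z i).2 (hpcx i x) (Set.mem_iInter.1 hx i)
    refine ⟨h, isHomeomorph_iff_continuous_bijective.2 ⟨hcont, hinj, hsurjh⟩, ?_⟩
    intro x i
    exact ⟨f x, ⟨x, hpcx i x, rfl⟩, hpcx i (f x)⟩
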